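/- Let F: ℝ⁵ → ℝ⁵ be the drift of the full slow-fast Stommel model, F(x,y,v,T,S) = (-(x-1)/ε_T - (1+P_a(x-y)²)x + 4vT, 1 - (1+P_a(x-y)²)y + 4vS, -v/ε, -(T + 2P²vx)/ε, -(S + 2P²vy)/ε), with ε_T, ε, P_a, P > 0. Then with the inner-product norm ‖u‖² = x² + y² + εv² + (2ε/P²)(T² + S²) there exist constants α, β > 0 such that ⟨u, F(u)⟩ ≤ α - β‖u‖² for all u ∈ ℝ⁵. -/

import Mathlib

/-- Dissipativity of the drift of the full slow-fast Stommel model: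
with the inner-product norm `‖u‖² = x² + y² + εv² + (2ε/P²)(T² + S²)` there
exist `α, β > 0` with `⟨u, F(u)⟩ ≤ α - β‖u‖²` for all `u ∈ ℝ⁵`. -/
theorem stmt_5 (εT ε Pa P : ℝ) (hεT : 0 < εT) (hε : 0 < ε) (hPa : 0 < Pa) (hP : 0 < P) :
    ∃ α β : ℝ, 0 < α ∧ 0 < β ∧ ∀ x y v T S : ℝ,
      x * (-(x-1)/εT - (1 + Pa*(x-y)^2)*x + 4*v*T)
      + y * (1 - (1 + Pa*(x-y)^2)*y + 4*v*S)
      + ε * v * (-v/ε)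
      + (2*ε/P^2) * (T * (-(T + 2*P^2*v*x)/ε) + S * (-(S + 2*P^2*v*y)/ε))
      ≤ α - β * (x^2 + y^2 + ε*v^2 + (2*ε/P^2)*(T^2 + S^2)) := by
  refine ⟨1/(2*εT) + 1/2, min (1/2) (1/ε), by positivity, by positivity, ?_⟩
  intro x y v T S
  have hβ1 : min (1/2 : ℝ) (1/ε) ≤ 1/2 := min_le_left _ _
  have hβ2 : min (1/2 : ℝ) (1/ε) ≤ 1/ε := min_le_right _ _
  set β := min (1/2 : ℝ) (1/ε) with hβ
  have hβpos : 0 < β := by positivity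
  have key : x * (-(x-1)/εT - (1 + Pa*(x-y)^2)*x + 4*v*T)
      + y * (1 - (1 + Pa*(x-y)^2)*y + 4*v*S)
      + ε * v * (-v/ε)
      + (2*ε/P^2) * (T * (-(T + 2*P^2*v*x)/ε) + S * (-(S + 2*P^2*v*y)/ε))
      = -(x^2/εT) + x/εT - x^2 - Pa*(x-y)^2*x^2 + y - y^2 - Pa*(x-y)^2*y^2
        - v^2 - (2/P^2)*(T^2 + S^2) := by
    field_simp
    ring
  rw [key]
  have h1 : x/εT ≤ x^2/(2*εT) + 1/(2*εT) := by
    rw [← add_div, div_le_div_iff₀ hεT (by positivity)]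
    nlinarith [sq_nonneg (x-1)]
  have h1' : x^2/(2*εT) ≤ x^2/εT := by
    apply div_le_div_of_nonneg_left (sq_nonneg x) hεT
    linarith
  have h2 : y ≤ y^2/2 + 1/2 := by nlinarith [sq_nonneg (y-1)]
  have hβε : β * ε ≤ 1 := by
    calc β * ε ≤ (1/ε) * ε := mul_le_mul_of_nonneg_right hβ2 hε.le
      _ = 1 := by field_simp
  have hv : β * (ε*v^2) ≤ v^2 := by
    have : β * (ε*v^2) = (β*ε) * v^2 := by ring
    rw [this]
    calc (β*ε) * v^2 ≤ 1 * v^2 := mul_le_mul_of_nonneg_right hβε (sq_nonneg v)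
      _ = v^2 := one_mul _
  have hTS : β * ((2*ε/P^2)*(T^2+S^2)) ≤ (2/P^2)*(T^2+S^2) := by
    have hts : (0:ℝ) ≤ (2/P^2)*(T^2+S^2) := by positivity
    have e : β * ((2*ε/P^2)*(T^2+S^2)) = (β*ε) * ((2/P^2)*(T^2+S^2)) := by ring
    rw [e]
    calc (β*ε) * ((2/P^2)*(T^2+S^2)) ≤ 1 * ((2/P^2)*(T^2+S^2)) :=
          mul_le_mul_of_nonneg_right hβε hts
      _ = _ := one_mul _
  have hx : β * x^2 ≤ x^2 := by
    calc β * x^2 ≤ (1/2) * x^2 := mul_le_mul_of_nonneg_right hβ1 (sq_nonneg x)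
      _ ≤ x^2 := by nlinarith [sq_nonneg x]
  have hy : β * y^2 ≤ y^2/2 := by
    calc β * y^2 ≤ (1/2) * y^2 := mul_le_mul_of_nonneg_right hβ1 (sq_nonneg y)
      _ = y^2/2 := by ring
  have hPax : 0 ≤ Pa*(x-y)^2*x^2 := by positivity
  have hPay : 0 ≤ Pa*(x-y)^2*y^2 := by positivity
  have e2 : β * (x^2 + y^2 + ε*v^2 + (2*ε/P^2)*(T^2 + S^2))
      = β*x^2 + β*y^2 + β*(ε*v^2) + β*((2*ε/P^2)*(T^2+S^2)) := by ring
  rw [e2]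
  linarith
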